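/- Let G be a simple graph of order n > 1 and size m that is irregular (i.e., not all vertex degrees of G are equal), and let Ḡ denote its complement. If m·M1(G) = n·M2(G), then (n(n-1)/2 - m)·M1(Ḡ) < n·M2(Ḡ). -/

import Mathlib

/-- Degree of a vertex (classical, so it works for any graph on a finite vertex type). -/
noncomputable def gdeg {V : Type*} [Fintype V] (G : SimpleGraph V) (v : V) : ℕ := by
  classical exact G.degree v

/-- First Zagreb index: sum of squares of the vertex degrees. -/
noncomputable def zagrebM1 {V : Type*} [Fintype V] (G : SimpleGraph V) : ℕ :=
  ∑ v, gdeg G v ^ 2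

/-- Second Zagreb index: sum of d(u)·d(v) over the edges uv. -/
noncomputable def zagrebM2 {V : Type*} [Fintype V] (G : SimpleGraph V) : ℕ := by
  classical exact
    ∑ e ∈ G.edgeFinset,
      Sym2.lift ⟨fun u v => gdeg G u * gdeg G v, fun u v => by simp [Nat.mul_comm]⟩ e

/-- The size (number of edges) of a graph. -/
noncomputable def gsize {V : Type*} [Fintype V] (G : SimpleGraph V) : ℕ := by
  classical exact G.edgeFinset.card

/-- A graph is `r`-regular if every vertex has degree `r`. -/
def gregOfDeg {V : Type*} [Fintype V] (G : SimpleGraph V) (r : ℕ) : Prop :=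
  ∀ v, gdeg G v = r

/-- A graph is regular if all its vertices have the same degree. -/
def gregular {V : Type*} [Fintype V] (G : SimpleGraph V) : Prop :=
  ∃ r, gregOfDeg G r

section Aux

variable {V : Type*} [Fintype V]

lemma gdeg_eq (G : SimpleGraph V) [DecidableRel G.Adj] (v : V) :
    gdeg G v = G.degree v := by
  unfold gdeg; congr!

lemma gsize_eq (G : SimpleGraph V) [DecidableRel G.Adj] [Fintype G.edgeSet] :
    gsize G = G.edgeFinset.card := by
  unfold gsize; congr!

lemma sum_nbhd_eq_darts [DecidableEq V]
    (H : SimpleGraph V) [DecidableRel H.Adj] (f : V → V → ℕ) :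
    ∑ u, ∑ v ∈ H.neighborFinset u, f u v = ∑ d : H.Dart, f d.fst d.snd := by
  have := Finset.sum_fiberwise_of_maps_to (g := fun d : H.Dart => d.fst)
      (fun d (_ : d ∈ Finset.univ) => Finset.mem_univ d.fst) (fun d => f d.fst d.snd)
  rw [← this]
  refine Finset.sum_congr rfl fun v _ => ?_
  rw [show (Finset.univ.filter fun d : H.Dart => d.fst = v)
      = ({d : H.Dart | d.fst = v} : Finset _) from rfl,
    SimpleGraph.dart_fst_fiber H v,
    Finset.sum_image (by intro a _ b _ hab; exact H.dartOfNeighborSet_injective v hab)]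
  rw [← Finset.sum_attach (H.neighborFinset v) (fun w => f v w)]
  apply Finset.sum_nbij' (fun w => ⟨w.1, (H.mem_neighborFinset v w.1).mp w.2⟩)
    (fun w => ⟨w.1, (H.mem_neighborFinset v w.1).mpr w.2⟩) <;>
    simp [SimpleGraph.dartOfNeighborSet]

lemma sum_darts_eq_two_mul [DecidableEq V]
    (H : SimpleGraph V) [DecidableRel H.Adj] (f : V → V → ℕ) (hf : ∀ u v, f u v = f v u) :
    ∑ d : H.Dart, f d.fst d.snd = 2 * ∑ e ∈ H.edgeFinset, Sym2.lift ⟨f, hf⟩ e := by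
  have := Finset.sum_fiberwise_of_maps_to (g := fun d : H.Dart => d.edge) (t := H.edgeFinset)
      (fun d (_ : d ∈ Finset.univ) => by rw [SimpleGraph.mem_edgeFinset]; exact d.edge_mem)
      (fun d => f d.fst d.snd)
  rw [← this, Finset.mul_sum]
  refine Finset.sum_congr rfl fun e he => ?_
  rw [SimpleGraph.mem_edgeFinset] at he
  induction e with
  | _ u v =>
    have hadj : H.Adj u v := he
    set d0 : H.Dart := ⟨(u, v), hadj⟩ with hd0
    have hfib : (Finset.univ.filter fun d : H.Dart => d.edge = s(u,v)) = {d0, d0.symm} := by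
      have := SimpleGraph.Dart.edge_fiber d0
      exact this
    rw [hfib, Finset.sum_pair (SimpleGraph.Dart.symm_ne d0).symm]
    simp [d0, SimpleGraph.Dart.symm, hf u v, two_mul]

/-- The key double-counting lemma: `2·M2` as a sum over ordered adjacent pairs. -/
lemma two_mul_zagrebM2 [DecidableEq V] (H : SimpleGraph V) [DecidableRel H.Adj]
    [Fintype H.edgeSet] :
    2 * zagrebM2 H = ∑ u, ∑ v ∈ H.neighborFinset u, gdeg H u * gdeg H v := by
  rw [sum_nbhd_eq_darts H (fun u v => gdeg H u * gdeg H v),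
    sum_darts_eq_two_mul H (fun u v => gdeg H u * gdeg H v)
      (fun u v => by simp [Nat.mul_comm])]
  congr 1
  unfold zagrebM2
  congr!

/-- Swap lemma. -/
lemma sum_nbhd_swap [DecidableEq V] (H : SimpleGraph V) [DecidableRel H.Adj] (g : V → ℤ) :
    ∑ u, ∑ v ∈ H.neighborFinset u, g v = ∑ v, (H.degree v : ℤ) * g v := by
  simp only [SimpleGraph.neighborFinset_eq_filter, Finset.sum_filter]
  rw [Finset.sum_comm]
  refine Finset.sum_congr rfl fun v _ => ?_
  rw [← Finset.sum_filter]
  have hfil : (Finset.univ.filter fun u => H.Adj u v) = H.neighborFinset v := by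
    ext u
    simp [SimpleGraph.mem_neighborFinset, SimpleGraph.adj_comm]
  rw [hfil, Finset.sum_const, SimpleGraph.card_neighborFinset_eq_degree,
    nsmul_eq_mul]

/-- Complement neighborhood sums. -/
lemma sum_compl_nbhd [DecidableEq V] (G : SimpleGraph V) [DecidableRel G.Adj]
    [DecidableRel Gᶜ.Adj] (g : V → ℤ) (u : V) :
    ∑ v ∈ Gᶜ.neighborFinset u, g v
      = (∑ v, g v) - (∑ v ∈ G.neighborFinset u, g v) - g u := by
  have h1 : Gᶜ.neighborFinset u = (G.neighborFinset u)ᶜ \ {u} := by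
    rw [← SimpleGraph.neighborFinset_compl]
    congr!
  rw [h1, Finset.sum_sdiff_eq_sub (by
    simp [Finset.singleton_subset_iff, Finset.mem_compl])]
  have h2 : ∑ v ∈ (G.neighborFinset u)ᶜ, g v
      = (∑ v, g v) - ∑ v ∈ G.neighborFinset u, g v := by
    rw [eq_sub_iff_add_eq, Finset.sum_compl_add_sum]
  rw [h2, Finset.sum_singleton]

end Aux

theorem stmt_1 {V : Type*} [Fintype V] (G : SimpleGraph V) (n m : ℕ)
    (hn : n = Fintype.card V) (hn1 : 1 < n) (hm : m = gsize G)
    (hirr : ¬ gregular G)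
    (h : m * zagrebM1 G = n * zagrebM2 G) :
    (n * (n - 1) / 2 - m) * zagrebM1 Gᶜ < n * zagrebM2 Gᶜ := by
  haveI : DecidableEq V := Classical.decEq V
  haveI hadj : DecidableRel G.Adj := Classical.decRel _
  haveI : DecidableRel Gᶜ.Adj := fun a b => decidable_of_iff _ (G.compl_adj a b).symm
  -- basic facts in ℕ
  have hdeg : ∀ v, gdeg G v = G.degree v := gdeg_eq G
  have hdegc : ∀ v, gdeg Gᶜ v = Gᶜ.degree v := gdeg_eq Gᶜ
  have hsumdeg : ∑ v, gdeg G v = 2 * m := by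
    simp only [hdeg]
    rw [G.sum_degrees_eq_twice_card_edges, hm, gsize_eq]
  have hdlt : ∀ v, gdeg G v < n := by
    intro v; rw [hdeg, hn]; exact G.degree_lt_card_verts v
  have hcompl_deg : ∀ v, gdeg Gᶜ v = (n - 1) - gdeg G v := by
    intro v; rw [hdegc, hdeg, SimpleGraph.degree_compl, hn]
  -- n ≥ 3
  have hn3 : 3 ≤ n := by
    rcases Nat.lt_or_ge n 3 with hlt | hge
    · exfalso
      have hn2 : n = 2 := by omega
      rw [hn2] at hn
      have hcard2 : Nat.card V = 2 := by rw [Nat.card_eq_fintype_card, ← hn]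
      obtain ⟨a, b, hab, huniv'⟩ := Nat.card_eq_two_iff.mp hcard2
      have huniv : ∀ z : V, z = a ∨ z = b := by
        intro z
        have : z ∈ ({a, b} : Set V) := by rw [huniv']; trivial
        simpa using this
      have hsum2 : gdeg G a + gdeg G b = 2 * m := by
        rw [← hsumdeg]
        have : (Finset.univ : Finset V) = {a, b} := by
          ext z; simpa using huniv z
        rw [this, Finset.sum_pair hab]
      have hda : gdeg G a < 2 := by have := hdlt a; omega
      have hdb : gdeg G b < 2 := by have := hdlt b; omega
      have hne : gdeg G a ≠ gdeg G b := by
        intro heq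
        exact hirr ⟨gdeg G a, fun v => by rcases huniv v with rfl | rfl <;> omega⟩
      omega
    · exact hge
  -- irregularity witnesses
  have hwit : ∃ a b : V, gdeg G a ≠ gdeg G b := by
    have hne : Nonempty V := by
      rw [← Fintype.card_pos_iff, ← hn]; omega
    obtain ⟨a⟩ := hne
    rw [gregular, not_exists] at hirr
    have := hirr (gdeg G a)
    rw [gregOfDeg, not_forall] at this
    obtain ⟨b, hb⟩ := this
    exact ⟨b, a, hb⟩
  -- integer setup
  set N : ℤ := (n : ℤ) with hN
  set Mm : ℤ := (m : ℤ) with hMm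
  set D : V → ℤ := fun v => (gdeg G v : ℤ) with hD
  set c : ℤ := N - 1 with hc
  have hDc : ∀ v, (gdeg Gᶜ v : ℤ) = c - D v := by
    intro v
    rw [hcompl_deg v]
    have h1 : gdeg G v ≤ n - 1 := by have := hdlt v; omega
    push_cast [Nat.cast_sub h1, Nat.cast_sub (by omega : 1 ≤ n)]
    ring
  set sD : ℤ := ∑ v, D v with hsD
  set sD2 : ℤ := ∑ v, D v ^ 2 with hsD2
  set A : V → ℤ := fun u => ∑ v ∈ G.neighborFinset u, D v with hA
  set Y : ℤ := ((2 * zagrebM2 G : ℕ) : ℤ) with hY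
  -- scalar facts
  have hcard : (Finset.univ : Finset V).card = n := by rw [hn]; rfl
  have hDdeg : ∀ v, (G.degree v : ℤ) = D v := by
    intro v; rw [hD]; exact_mod_cast (congrArg _ (hdeg v)).symm
  have f1 : sD = 2 * Mm := by
    rw [hsD, hMm]
    simp only [hD]
    exact_mod_cast hsumdeg
  have fM1 : (zagrebM1 G : ℤ) = sD2 := by
    rw [zagrebM1, hsD2]
    push_cast
    rfl
  have fY : Y = ∑ u, D u * A u := by
    rw [hY, two_mul_zagrebM2 G]
    push_cast
    refine Finset.sum_congr rfl fun u _ => ?_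
    rw [hA, Finset.mul_sum]
  have fA : ∑ u, A u = sD2 := by
    rw [hA, hsD2]
    simp only []
    rw [sum_nbhd_swap G D]
    refine Finset.sum_congr rfl fun v _ => ?_
    rw [hDdeg v]; ring
  have fcardnb : ∀ u, ((G.neighborFinset u).card : ℤ) = D u := by
    intro u
    rw [SimpleGraph.card_neighborFinset_eq_degree, hDdeg u]
  have fh : N * Y = 2 * Mm * sD2 := by
    rw [hY, ← fM1, hN, hMm]
    push_cast
    nlinarith [h]
  -- strict Cauchy-Schwarz
  have hCS : 4 * Mm ^ 2 < N * sD2 := by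
    obtain ⟨a, b, hab⟩ := hwit
    have hab' : D a ≠ D b := by
      simp only [hD]; exact_mod_cast hab
    have e : ∀ u, ∑ v, (D u - D v) ^ 2 = N * D u ^ 2 - (2 * sD) * D u + sD2 := by
      intro u
      rw [Finset.sum_congr rfl fun v _ => (by ring :
        (D u - D v) ^ 2 = (D u ^ 2 - (2 * D u) * D v) + D v ^ 2)]
      rw [Finset.sum_add_distrib, Finset.sum_sub_distrib, Finset.sum_const, hcard,
        ← Finset.mul_sum, ← hsD, ← hsD2, nsmul_eq_mul, hN]
      ring
    have hid : ∑ u, ∑ v, (D u - D v) ^ 2 = 2 * (N * sD2) - 2 * sD ^ 2 := by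
      rw [Finset.sum_congr rfl fun u _ => e u]
      rw [Finset.sum_add_distrib, Finset.sum_sub_distrib, Finset.sum_const, hcard,
        ← Finset.mul_sum, ← Finset.mul_sum, ← hsD, ← hsD2, nsmul_eq_mul, hN]
      ring
    have hpos : 0 < ∑ u, ∑ v, (D u - D v) ^ 2 := by
      refine Finset.sum_pos' (fun u _ => Finset.sum_nonneg fun v _ => sq_nonneg _) ?_
      refine ⟨a, Finset.mem_univ a, ?_⟩
      refine Finset.sum_pos' (fun v _ => sq_nonneg _) ⟨b, Finset.mem_univ b, ?_⟩
      have : D a - D b ≠ 0 := sub_ne_zero_of_ne hab'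
      positivity
    have hsq : sD ^ 2 = 4 * Mm ^ 2 := by rw [f1]; ring
    nlinarith [hid, hpos, hsq]
  -- complement quantities
  haveI : Fintype (Gᶜ.edgeSet) := SimpleGraph.fintypeEdgeSet Gᶜ
  set Xc : ℤ := ((2 * zagrebM2 Gᶜ : ℕ) : ℤ) with hXc
  have fXc1 : Xc = ∑ u, ∑ v ∈ Gᶜ.neighborFinset u, (c - D u) * (c - D v) := by
    rw [hXc, two_mul_zagrebM2 Gᶜ]
    push_cast
    refine Finset.sum_congr rfl fun u _ => Finset.sum_congr rfl fun v _ => ?_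
    rw [hDc u, hDc v]
  have hsc : ∑ v, (c - D v) = N * c - 2 * Mm := by
    rw [Finset.sum_sub_distrib, Finset.sum_const, hcard, ← hsD, f1, nsmul_eq_mul, hN]
  have fXc2 : Xc = ∑ u, (c - D u) * ((N * c - 2 * Mm) - (D u * c - A u) - (c - D u)) := by
    rw [fXc1]
    refine Finset.sum_congr rfl fun u _ => ?_
    rw [← Finset.mul_sum, sum_compl_nbhd G (fun v => c - D v) u]
    congr 1
    rw [hsc]
    congr 2
    rw [Finset.sum_sub_distrib, Finset.sum_const, nsmul_eq_mul, fcardnb u, hA]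
  have fXc3 : Xc = N * (c * (N * c - 2 * Mm - c))
      + (2 * c - c ^ 2 - (N * c - 2 * Mm)) * sD + (c - 1) * sD2 + c * sD2 - Y := by
    rw [fXc2]
    rw [Finset.sum_congr rfl fun u _ => (by ring :
      (c - D u) * ((N * c - 2 * Mm) - (D u * c - A u) - (c - D u))
        = (c * (N * c - 2 * Mm - c) + (2 * c - c ^ 2 - (N * c - 2 * Mm)) * D u
            + (c - 1) * D u ^ 2 + c * A u) - D u * A u)]
    rw [Finset.sum_sub_distrib, Finset.sum_add_distrib, Finset.sum_add_distrib,
      Finset.sum_add_distrib, Finset.sum_const, hcard,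
      ← Finset.mul_sum, ← Finset.mul_sum, ← Finset.mul_sum,
      ← hsD, ← hsD2, fA, ← fY, nsmul_eq_mul, hN]
  have fM1c : (zagrebM1 Gᶜ : ℤ) = N * c ^ 2 - 2 * c * sD + sD2 := by
    have : (zagrebM1 Gᶜ : ℤ) = ∑ v, (c - D v) ^ 2 := by
      rw [zagrebM1]
      push_cast
      exact Finset.sum_congr rfl fun v _ => by rw [hDc v]
    rw [this, Finset.sum_congr rfl fun v _ => (by ring :
      (c - D v) ^ 2 = (c ^ 2 - (2 * c) * D v) + D v ^ 2)]
    rw [Finset.sum_add_distrib, Finset.sum_sub_distrib, Finset.sum_const, hcard,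
      ← Finset.mul_sum, ← hsD, ← hsD2, nsmul_eq_mul, hN]
  -- the main integer inequality
  clear_value N Mm c sD sD2 Y Xc
  have key : N * Xc - (N * (N - 1) - 2 * Mm) * (zagrebM1 Gᶜ : ℤ)
      = (N - 2) * (N * sD2 - 4 * Mm ^ 2) := by
    rw [fXc3, fM1c, hc, f1]
    linear_combination -fh
  have hN3 : (3 : ℤ) ≤ N := by rw [hN]; exact_mod_cast hn3
  have hmain : (N * (N - 1) - 2 * Mm) * (zagrebM1 Gᶜ : ℤ) < N * Xc := by
    have hpos2 : 0 < (N - 2) * (N * sD2 - 4 * Mm ^ 2) :=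
      mul_pos (by linarith) (by linarith)
    linarith [key, hpos2]
  -- back to ℕ
  have hmle : m ≤ n * (n - 1) / 2 := by
    rw [hm, hn, gsize_eq, ← Nat.choose_two_right]
    exact G.card_edgeFinset_le_card_choose_two
  have hdvd : 2 ∣ n * (n - 1) := by
    rcases Nat.even_or_odd n with he | ho
    · exact Dvd.dvd.mul_right he.two_dvd _
    · exact Dvd.dvd.mul_left (Nat.Odd.sub_odd ho odd_one).two_dvd _
  have h2m : 2 * m ≤ n * (n - 1) := by
    obtain ⟨k, hk⟩ := hdvd
    omega
  have h2 : 2 * (n * (n - 1) / 2 - m) = n * (n - 1) - 2 * m := by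
    obtain ⟨k, hk⟩ := hdvd
    omega
  have hcast : ((n * (n - 1) - 2 * m : ℕ) : ℤ) = N * (N - 1) - 2 * Mm := by
    rw [Nat.cast_sub h2m, Nat.cast_mul, Nat.cast_sub (by omega : 1 ≤ n)]
    push_cast [hN, hMm]
    ring
  have hNat : (n * (n - 1) - 2 * m) * zagrebM1 Gᶜ < n * (2 * zagrebM2 Gᶜ) := by
    have hZ : ((n * (n - 1) - 2 * m : ℕ) : ℤ) * (zagrebM1 Gᶜ : ℤ)
        < (n : ℤ) * ((2 * zagrebM2 Gᶜ : ℕ) : ℤ) := by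
      rw [hcast, ← hXc, ← hN]
      exact hmain
    exact_mod_cast hZ
  have hfin : 2 * ((n * (n - 1) / 2 - m) * zagrebM1 Gᶜ) < 2 * (n * zagrebM2 Gᶜ) := by
    calc 2 * ((n * (n - 1) / 2 - m) * zagrebM1 Gᶜ)
        = (2 * (n * (n - 1) / 2 - m)) * zagrebM1 Gᶜ := by ring
      _ = (n * (n - 1) - 2 * m) * zagrebM1 Gᶜ := by rw [h2]
      _ < n * (2 * zagrebM2 Gᶜ) := hNat
      _ = 2 * (n * zagrebM2 Gᶜ) := by ring
  omega
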